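/- The causal complement of the right wedge is the closed opposite wedge: the set of points x ∈ ℝ⁴ that are causally disjoint from every point of W equals {x ∈ ℝ⁴ : x₃ ≤ −|x₀|}. That is, {x : ∀ y, y₃ > |y₀| → q(x − y) ≤ 0} = {x : x₃ ≤ −|x₀|}. -/

import Mathlib

/-- Minkowski square on ℝ⁴. -/
noncomputable def q (x : Fin 4 → ℝ) : ℝ := x 0 ^ 2 - x 1 ^ 2 - x 2 ^ 2 - x 3 ^ 2

/-- The causal complement of the right wedge `W = {x | x 3 > |x 0|}` is the closed
opposite wedge `{x | x 3 ≤ -|x 0|}`. -/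
theorem causal_complement_of_wedge :
    {x : Fin 4 → ℝ | ∀ y : Fin 4 → ℝ, y 3 > |y 0| → q (x - y) ≤ 0} =
      {x : Fin 4 → ℝ | x 3 ≤ -|x 0|} := by
  ext x
  simp only [Set.mem_setOf_eq]
  constructor
  · intro h
    by_contra hx
    push_neg at hx
    by_cases h1 : x 3 > |x 0|
    · set δ : ℝ := (x 3 - |x 0|) / 2 with hδ
      have hδpos : 0 < δ := by simp [hδ]; linarith
      set y : Fin 4 → ℝ := fun i => if i = 0 then x 0 + δ else x i with hy
      have hy3 : y 3 = x 3 := by simp [hy]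
      have hy0 : y 0 = x 0 + δ := by simp [hy]
      have habs : |y 0| ≤ |x 0| + δ := by
        rw [hy0]
        calc |x 0 + δ| ≤ |x 0| + |δ| := abs_add_le _ _
        _ = |x 0| + δ := by rw [abs_of_pos hδpos]
      have hyW : y 3 > |y 0| := by
        rw [hy3]
        have : |x 0| + δ < x 3 := by simp [hδ]; linarith
        linarith
      have := h y hyW
      have hq : q (x - y) = δ ^ 2 := by
        simp [q, Pi.sub_apply, hy]
      rw [hq] at this
      nlinarith
    · push_neg at h1
      set ε : ℝ := (x 3 + |x 0|) / 2 with hε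
      have hεpos : 0 < ε := by simp [hε]; linarith
      have hx0 : 0 < |x 0| := by
        rcases lt_or_ge 0 (|x 0|) with h' | h'
        · exact h'
        · have : |x 0| = 0 := le_antisymm h' (abs_nonneg _)
          rw [this] at hx h1; linarith
      set y : Fin 4 → ℝ := fun i => if i = 3 then ε else if i = 0 then 0 else x i with hy
      have hyW : y 3 > |y 0| := by simp [hy]; exact hεpos
      have := h y hyW
      have hq : q (x - y) = x 0 ^ 2 - (x 3 - ε) ^ 2 := by
        simp [q, Pi.sub_apply, hy]
      rw [hq] at this
      have hlt : |x 3 - ε| < |x 0| := by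
        rw [abs_lt]
        constructor
        · simp [hε]; linarith
        · simp [hε]; linarith
      nlinarith [abs_nonneg (x 3 - ε), sq_abs (x 3 - ε), sq_abs (x 0)]
  · intro hx y hy
    have h1 : x 3 - y 3 < -(|x 0| + |y 0|) := by linarith
    have h2 : |x 0 - y 0| ≤ |x 0| + |y 0| := abs_sub _ _
    have h3 : (x 0 - y 0) ^ 2 ≤ (x 3 - y 3) ^ 2 := by
      nlinarith [abs_nonneg (x 0 - y 0), sq_abs (x 0 - y 0), abs_nonneg (x 0), abs_nonneg (y 0)]
    have hq : q (x - y) = (x 0 - y 0) ^ 2 - (x 1 - y 1) ^ 2 - (x 2 - y 2) ^ 2 - (x 3 - y 3) ^ 2 := by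
      simp [q, Pi.sub_apply]
    rw [hq]
    nlinarith [sq_nonneg (x 1 - y 1), sq_nonneg (x 2 - y 2)]
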